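/- Let q be even (a power of 2) and let a, b be elements of the algebraic closure of F_q with a^{q+1} = b^{q+1} = 1 and ab ≠ 1. Let A and B be the root sets of x^{q^3} + a x^{q^2} + x^q + a x and x^{q^3} + b x^{q^2} + x^q + b x respectively. Then |A^{-1} ∩ B| = 2q^2 − q − 1. -/

import Mathlib

open Polynomial Set

section helpers
variable {K : Type*} [Field K]
open scoped Classical

lemma root_set_eq_coe (p : K[X]) (h0 : p ≠ 0) :
    {x : K | p.eval x = 0} = (p.roots.toFinset : Set K) := by
  ext x
  simp [Polynomial.mem_roots, h0, Polynomial.IsRoot]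

lemma root_finite (p : K[X]) (h0 : p ≠ 0) : {x : K | p.eval x = 0}.Finite := by
  rw [root_set_eq_coe p h0]; exact (p.roots.toFinset).finite_toSet

lemma root_bound (p : K[X]) (h0 : p ≠ 0) : {x : K | p.eval x = 0}.ncard ≤ p.natDegree := by
  rw [root_set_eq_coe p h0, Set.ncard_coe_finset]
  exact le_trans (Multiset.toFinset_card_le _) (p.card_roots' )

lemma root_count [IsAlgClosed K] (p : K[X]) (hs : p.Separable) (h0 : p ≠ 0) :
    {x : K | p.eval x = 0}.ncard = p.natDegree := by
  rw [root_set_eq_coe p h0, Set.ncard_coe_finset,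
    Multiset.toFinset_card_of_nodup (Polynomial.nodup_roots hs)]
  exact (Polynomial.splits_iff_card_roots.mp (IsAlgClosed.splits p))

end helpers


section char2cnt
variable {K : Type*} [Field K] [CharP K 2] [IsAlgClosed K]

lemma two_pow_cast_eq_zero (m : ℕ) (hm : m ≠ 0) : ((2^m : ℕ) : K) = 0 := by
  have h2 : (2 : K) = 0 := by exact_mod_cast CharP.cast_eq_zero K 2
  push_cast
  rw [h2, zero_pow hm]

lemma sep_X_pow_sub_X (m : ℕ) (hm : m ≠ 0) : (X ^ (2^m) - X : K[X]).Separable := by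
  rw [Polynomial.separable_def]
  have hd : derivative (X ^ (2^m) - X : K[X]) = -1 := by
    rw [derivative_sub, derivative_X_pow, derivative_X, two_pow_cast_eq_zero m hm]
    simp
  rw [hd]
  exact (isCoprime_one_right).neg_right

lemma natDegree_X_pow_sub_X (n : ℕ) (hn : 2 ≤ n) : (X ^ n - X : K[X]).natDegree = n := by
  rw [natDegree_sub_eq_left_of_natDegree_lt] <;> simp [natDegree_X_pow] <;> omega

lemma X_pow_sub_X_ne_zero (n : ℕ) (hn : 2 ≤ n) : (X ^ n - X : K[X]) ≠ 0 := by
  intro h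
  have := natDegree_X_pow_sub_X (K := K) n hn
  rw [h] at this
  simp at this
  omega

/-- number of solutions of `x^(2^m) = x`. -/
lemma count_fixed (m : ℕ) (hm : m ≠ 0) : {x : K | x ^ (2^m) = x}.ncard = 2^m := by
  have h2 : 2 ≤ 2^m := by
    calc 2 = 2^1 := (pow_one 2).symm
    _ ≤ 2^m := Nat.pow_le_pow_right (by norm_num) (by omega)
  have hset : {x : K | x ^ (2^m) = x} = {x : K | (X ^ (2^m) - X : K[X]).eval x = 0} := by
    ext x; simp [sub_eq_zero]
  rw [hset, root_count _ (sep_X_pow_sub_X m hm) (X_pow_sub_X_ne_zero _ h2),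
    natDegree_X_pow_sub_X _ h2]

lemma fixed_finite (m : ℕ) (hm : m ≠ 0) : {x : K | x ^ (2^m) = x}.Finite := by
  have h2 : 2 ≤ 2^m := by
    calc 2 = 2^1 := (pow_one 2).symm
    _ ≤ 2^m := Nat.pow_le_pow_right (by norm_num) (by omega)
  have hset : {x : K | x ^ (2^m) = x} = {x : K | (X ^ (2^m) - X : K[X]).eval x = 0} := by
    ext x; simp [sub_eq_zero]
  rw [hset]
  exact root_finite _ (X_pow_sub_X_ne_zero _ h2)

/-- number of solutions of `x^(q-1) = e`, `q = 2^k`, `e ≠ 0`. -/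
lemma count_root_shell (q : ℕ) (k : ℕ) (hk : k ≠ 0) (hq : q = 2^k) (e : K) (he : e ≠ 0) :
    {x : K | x ^ (q-1) = e}.ncard = q - 1 := by
  have hq2 : 2 ≤ q := by
    subst hq
    calc 2 = 2^1 := (pow_one 2).symm
    _ ≤ 2^k := Nat.pow_le_pow_right (by norm_num) (by omega)
  have hcast : ((q - 1 : ℕ) : K) ≠ 0 := by
    have : ((q : ℕ) : K) = 0 := by rw [hq]; exact two_pow_cast_eq_zero k hk
    have h1 : ((q - 1 : ℕ) : K) = (q : K) - 1 := by
      push_cast [Nat.cast_sub (by omega : 1 ≤ q)]; ring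
    rw [h1, this]
    simp
  have hsep := Polynomial.separable_X_pow_sub_C (F := K) (n := q - 1) e hcast he
  have hne : (X ^ (q-1) - C e : K[X]) ≠ 0 := by
    intro h
    have : (X ^ (q-1) - C e : K[X]).natDegree = q - 1 := natDegree_X_pow_sub_C
    rw [h] at this
    simp at this
    omega
  have hset : {x : K | x ^ (q-1) = e} = {x : K | (X ^ (q-1) - C e : K[X]).eval x = 0} := by
    ext x; simp [sub_eq_zero]
  rw [hset, root_count _ hsep hne, natDegree_X_pow_sub_C]

lemma shell_finite (q : ℕ) (hq2 : 2 ≤ q) (e : K) :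
    {x : K | x ^ (q-1) = e}.Finite := by
  have hne : (X ^ (q-1) - C e : K[X]) ≠ 0 := by
    intro h
    have : (X ^ (q-1) - C e : K[X]).natDegree = q - 1 := natDegree_X_pow_sub_C
    rw [h] at this
    simp at this
    omega
  have hset : {x : K | x ^ (q-1) = e} = {x : K | (X ^ (q-1) - C e : K[X]).eval x = 0} := by
    ext x; simp [sub_eq_zero]
  rw [hset]
  exact root_finite _ hne

end char2cnt

set_option linter.unusedSectionVars false

section Mfun
variable {K : Type*} [Field K] [CharP K 2]

/-- partial additive "trace" polynomial map `x ↦ ∑_{i<k} x^(2^i)`. -/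
noncomputable def Mf (k : ℕ) (x : K) : K := ∑ i ∈ Finset.range k, x ^ (2^i)

/-- `L = M + M^q`. -/
noncomputable def Lf (k : ℕ) (x : K) : K := Mf k x + (Mf k x)^(2^k)

lemma two0 : (2 : K) = 0 := by exact_mod_cast CharP.cast_eq_zero K 2

lemma Mf_zero (k : ℕ) : Mf k (0 : K) = 0 := by
  unfold Mf
  apply Finset.sum_eq_zero
  intro i _
  exact zero_pow (by positivity)

lemma Mf_add (k : ℕ) (x y : K) : Mf k (x + y) = Mf k x + Mf k y := by
  haveI : Fact (Nat.Prime 2) := ⟨Nat.prime_two⟩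
  unfold Mf
  rw [← Finset.sum_add_distrib]
  exact Finset.sum_congr rfl fun i _ => add_pow_char_pow ..

lemma Mf_frob (k m : ℕ) (x : K) : (Mf k x)^(2^m) = Mf k (x^(2^m)) := by
  haveI : Fact (Nat.Prime 2) := ⟨Nat.prime_two⟩
  unfold Mf
  rw [sum_pow_char_pow]
  exact Finset.sum_congr rfl fun i _ => by
    rw [← pow_mul, ← pow_mul, mul_comm]

lemma Mf_sq_add (k : ℕ) (x : K) : (Mf k x)^2 + Mf k x = x^(2^k) + x := by
  have h2 : (Mf k x)^2 = Mf k (x^2) := by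
    have := Mf_frob (K := K) k 1 x
    simpa using this
  rw [h2]
  unfold Mf
  rw [← Finset.sum_add_distrib]
  have hterm : ∀ i ∈ Finset.range k,
      (x^2)^(2^i) + x^(2^i) = x^(2^(i+1)) - x^(2^i) := by
    intro i _
    rw [CharTwo.sub_eq_add, ← pow_mul, pow_succ, mul_comm (2^i) 2]
  rw [Finset.sum_congr rfl hterm, Finset.sum_range_sub (fun i => x^(2^i))]
  rw [CharTwo.sub_eq_add]
  simp

lemma Lf_quad (k : ℕ) (w : K) : Lf k (w^2 + w) = w^(2^(2*k)) + w := by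
  haveI : Fact (Nat.Prime 2) := ⟨Nat.prime_two⟩
  have hM : Mf k (w^2 + w) = w^(2^k) + w := by
    rw [Mf_add]
    have : Mf k (w^2) = (Mf k w)^2 := by
      have := Mf_frob (K := K) k 1 w
      simpa using this.symm
    rw [this]
    exact Mf_sq_add k w
  unfold Lf
  rw [hM, add_pow_char_pow]
  have hpow : (w^(2^k))^(2^k) = w^(2^(2*k)) := by
    rw [← pow_mul, ← pow_add, two_mul]
  rw [hpow]
  linear_combination (w^(2^k)) * (two0 (K := K))

lemma Lf_scale (k : ℕ) (u₀ s : K) (hs : s^(2^k) = s) :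
    Lf k (u₀ * s) = Mf k ((u₀ + u₀^(2^k)) * s) := by
  unfold Lf
  rw [Mf_frob k k, mul_pow, hs, ← Mf_add]
  congr 1
  ring

end Mfun

section P1
variable {K : Type*} [Field K] [CharP K 2] [IsAlgClosed K]
open Polynomial

/-- the polynomial giving `Mf`. -/
noncomputable def MP (k : ℕ) : K[X] := ∑ i ∈ Finset.range k, X^(2^i)

lemma MP_eval (k : ℕ) (x : K) : (MP k : K[X]).eval x = Mf k x := by
  unfold MP Mf
  simp [Polynomial.eval_finset_sum]

lemma MP_natDegree_le (k : ℕ) : (MP k : K[X]).natDegree ≤ 2^(k-1) := by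
  apply Polynomial.natDegree_sum_le_of_forall_le
  intro i hi
  rw [Polynomial.natDegree_X_pow]
  exact Nat.pow_le_pow_right (by norm_num) (by simp at hi; omega)

lemma MP_coeff_one (k : ℕ) (hk : k ≠ 0) : (MP k : K[X]).coeff 1 = 1 := by
  unfold MP
  rw [Polynomial.finset_sum_coeff]
  have h : ∀ i ∈ Finset.range k, (X^(2^i) : K[X]).coeff 1 = if i = 0 then 1 else 0 := by
    intro i _
    rw [Polynomial.coeff_X_pow]
    congr 1
    simp only [eq_iff_iff]
    constructor
    · intro h
      by_contra hi
      have : 2 ≤ 2^i := by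
        calc 2 = 2^1 := (pow_one 2).symm
        _ ≤ 2^i := Nat.pow_le_pow_right (by norm_num) (by omega)
      omega
    · intro h; subst h; norm_num
  rw [Finset.sum_congr rfl h, Finset.sum_ite_eq' (Finset.range k) 0 (fun _ => (1:K))]
  simp [Nat.pos_of_ne_zero hk]

lemma MP_ne_zero (k : ℕ) (hk : k ≠ 0) : (MP k : K[X]) ≠ 0 := by
  intro h
  have := MP_coeff_one (K := K) k hk
  rw [h] at this
  simp at this

lemma MP_sub_one_ne_zero (k : ℕ) (hk : k ≠ 0) : (MP k - 1 : K[X]) ≠ 0 := by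
  intro h
  have h1 : (MP k - 1 : K[X]).coeff 1 = 1 := by
    rw [Polynomial.coeff_sub, MP_coeff_one k hk]
    simp [Polynomial.coeff_one]
  rw [h] at h1
  simp at h1

lemma count_P1 (k : ℕ) (hk : k ≠ 0) :
    {w : K | w^(2^k) = w ∧ Mf k w = 1}.ncard = 2^(k-1) := by
  set Fq : Set K := {w : K | w^(2^k) = w} with hFq
  set P0 : Set K := {w : K | w^(2^k) = w ∧ Mf k w = 0} with hP0
  set P1 : Set K := {w : K | w^(2^k) = w ∧ Mf k w = 1} with hP1
  have hFqfin : Fq.Finite := fixed_finite k hk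
  have hP0fin : P0.Finite := hFqfin.subset (fun w hw => hw.1)
  have hP1fin : P1.Finite := hFqfin.subset (fun w hw => hw.1)
  have hunion : Fq = P0 ∪ P1 := by
    ext w
    constructor
    · intro hw
      have hw' : w^(2^k) = w := hw
      have h0 : (Mf k w)^2 + Mf k w = 0 := by
        rw [Mf_sq_add k w, hw']
        linear_combination w * (two0 (K := K))
      have hMw : Mf k w * (Mf k w + 1) = 0 := by linear_combination h0
      rcases mul_eq_zero.mp hMw with h | h
      · exact Or.inl ⟨hw', h⟩
      · refine Or.inr ⟨hw', ?_⟩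
        linear_combination h - (two0 (K := K))
    · rintro (⟨h, _⟩ | ⟨h, _⟩) <;> exact h
  have hdisj : Disjoint P0 P1 := by
    rw [Set.disjoint_left]
    rintro w ⟨_, h0⟩ ⟨_, h1⟩
    rw [h0] at h1
    exact zero_ne_one h1
  have hcards : P0.ncard + P1.ncard = 2^k := by
    rw [← Set.ncard_union_eq hdisj hP0fin hP1fin, ← hunion, hFq, count_fixed k hk]
  have hb0 : P0.ncard ≤ 2^(k-1) := by
    have hsub : P0 ⊆ {x : K | (MP k : K[X]).eval x = 0} := by
      intro w hw
      simp only [Set.mem_setOf_eq, MP_eval]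
      exact hw.2
    calc P0.ncard ≤ {x : K | (MP k : K[X]).eval x = 0}.ncard :=
          Set.ncard_le_ncard hsub (root_finite _ (MP_ne_zero k hk))
    _ ≤ (MP k : K[X]).natDegree := root_bound _ (MP_ne_zero k hk)
    _ ≤ 2^(k-1) := MP_natDegree_le k
  have hb1 : P1.ncard ≤ 2^(k-1) := by
    have hne := MP_sub_one_ne_zero (K := K) k hk
    have hsub : P1 ⊆ {x : K | (MP k - 1 : K[X]).eval x = 0} := by
      intro w hw
      simp only [Set.mem_setOf_eq, Polynomial.eval_sub, Polynomial.eval_one, MP_eval]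
      rw [hw.2]; ring
    calc P1.ncard ≤ {x : K | (MP k - 1 : K[X]).eval x = 0}.ncard :=
          Set.ncard_le_ncard hsub (root_finite _ hne)
    _ ≤ (MP k - 1: K[X]).natDegree := root_bound _ hne
    _ ≤ 2^(k-1) := by
        refine le_trans (Polynomial.natDegree_sub_le _ _) ?_
        simp [MP_natDegree_le k]
  have h2k : 2^k = 2 * 2^(k-1) := by
    obtain ⟨k', rfl⟩ : ∃ k', k = k' + 1 := ⟨k - 1, by omega⟩
    rw [pow_succ]
    simp [mul_comm]
  omega

end P1

section mainsec
variable {K : Type*} [Field K] [CharP K 2] [IsAlgClosed K]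
open Polynomial

lemma pow_eq_finite (n : ℕ) (hn : n ≠ 0) (e : K) : {x : K | x^n = e}.Finite := by
  have hne : (X ^ n - C e : K[X]) ≠ 0 := by
    intro h
    have h1 : (X ^ n - C e : K[X]).natDegree = n := natDegree_X_pow_sub_C
    rw [h] at h1
    simp at h1
    omega
  have hset : {x : K | x ^ n = e} = {x : K | (X ^ n - C e : K[X]).eval x = 0} := by
    ext x; simp [sub_eq_zero]
  rw [hset]
  exact root_finite _ hne

lemma main_count {K : Type*} [Field K] [CharP K 2] [IsAlgClosed K]
    (k q : ℕ) (hk : k ≠ 0) (hqk : q = 2^k)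
    (a b : K) (ha : a^(q+1) = 1) (hb : b^(q+1) = 1) (hab : a*b ≠ 1) :
    {y : K | y ≠ 0 ∧ (y⁻¹)^(q^3) + a*(y⁻¹)^(q^2) + (y⁻¹)^q + a*y⁻¹ = 0 ∧
      y^(q^3) + b*y^(q^2) + y^q + b*y = 0}.ncard = 2*q^2 - q - 1 := by
  haveI : Fact (Nat.Prime 2) := ⟨Nat.prime_two⟩
  have hq2 : 2 ≤ q := by
    rw [hqk]
    calc 2 = 2^1 := (pow_one 2).symm
    _ ≤ 2^k := Nat.pow_le_pow_right (by norm_num) (by omega)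
  have hq1 : q - 1 ≠ 0 := by omega
  have ha0 : a ≠ 0 := by
    intro h; rw [h, zero_pow (by omega : q+1 ≠ 0)] at ha; exact zero_ne_one ha
  have hb0 : b ≠ 0 := by
    intro h; rw [h, zero_pow (by omega : q+1 ≠ 0)] at hb; exact zero_ne_one hb
  have hainv : a * a^q = 1 := by rw [← pow_succ']; exact ha
  have hbinv : b * b^q = 1 := by rw [← pow_succ']; exact hb
  -- exponent identities
  have E1 : (q-1)*(q+1)+1 = q^2 := by zify [show 1 ≤ q by omega]; ring
  have E2 : (q-1)*(q+1)+2 = q^2+1 := by zify [show 1 ≤ q by omega]; ring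
  have hq2k : q^2 = 2^(2*k) := by rw [hqk, ← pow_mul, mul_comm]
  have h2k0 : 2*k ≠ 0 := by omega
  set N : ℕ := (q^2+1)*(q-1) with hN
  have hN0 : N ≠ 0 := by positivity
  set c : K := b * a^q with hc
  have hc0 : c ≠ 0 := mul_ne_zero hb0 (pow_ne_zero _ ha0)
  set d : K := (a*b)^q with hd
  have hd0 : d ≠ 0 := pow_ne_zero _ (mul_ne_zero ha0 hb0)
  have hd1 : d ≠ 1 := by
    intro h
    apply hab
    have hsub : (a*b - 1)^q = 0 := by
      rw [hqk, sub_pow_char_pow, ← hqk]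
      rw [← hd, h]; simp
    have := pow_eq_zero_iff (n := q) (by omega) |>.mp hsub
    exact sub_eq_zero.mp this
  have hdq1 : d^(q+1) = 1 := by
    rw [hd, ← pow_mul, mul_comm q (q+1), pow_mul, mul_pow, ha, hb, one_mul, one_pow]
  -- generic: elements with mu^(q-1) = 1
  have hmu : ∀ μ : K, μ^(q-1) = 1 → μ^(q^2) = μ ∧ μ^N = 1 := by
    intro μ h
    constructor
    · rw [← E1, pow_add, pow_mul, h, one_pow, one_mul, pow_one]
    · rw [hN, mul_comm, pow_mul, h, one_pow]
  -- frobenius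
  have frobq : ∀ x y : K, (x+y)^q = x^q + y^q := by
    intro x y; rw [hqk]; exact add_pow_char_pow ..
  -- characterisation of root sets
  have hchar : ∀ (e : K), e ≠ 0 → ∀ x : K,
      (x^(q^3) + e*x^(q^2) + x^q + e*x = 0 ↔
        (x^(q^2) = x ∨ (x^(q^2)+x)^(q-1) = e)) := by
    intro e he x
    have hz : (x^(q^2)+x)^q + e*(x^(q^2)+x) = x^(q^3) + e*x^(q^2) + x^q + e*x := by
      rw [frobq]
      have h3 : (x^(q^2))^q = x^(q^3) := by
        rw [← pow_mul, ← pow_succ]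
      rw [h3]; ring
    rw [← hz]
    have hzq : (x^(q^2)+x)^q = (x^(q^2)+x)^(q-1) * (x^(q^2)+x) := by
      rw [← pow_succ]
      congr 1
      omega
    rw [hzq]
    constructor
    · intro h
      have h' : (x^(q^2)+x) * ((x^(q^2)+x)^(q-1) + e) = 0 := by linear_combination h
      rcases mul_eq_zero.mp h' with h'' | h''
      · left; linear_combination h'' - x * (two0 (K := K))
      · right; linear_combination h'' - e * (two0 (K := K))
    · rintro (h | h)
      · have hz0 : x^(q^2) + x = 0 := by
          rw [h]; linear_combination x * (two0 (K := K))
        rw [hz0]; ring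
      · linear_combination (x^(q^2)+x) * h + (e*(x^(q^2)+x)) * (two0 (K := K))
  -- the key inverse computation
  have Hxy : ∀ y : K, y ≠ 0 →
      ((y⁻¹)^(q^2)+y⁻¹)^(q-1) = (y^(q^2)+y)^(q-1) * (y^N)⁻¹ := by
    intro y hy
    have hyq : y^(q^2) ≠ 0 := pow_ne_zero _ hy
    have h1 : (y⁻¹)^(q^2)+y⁻¹ = (y^(q^2)+y) * (y^(q^2)*y)⁻¹ := by
      rw [inv_pow]
      field_simp
      ring
    rw [h1, mul_pow, inv_pow, ← pow_succ, ← pow_mul, hN]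
  -- the sets
  set Fstar : Set K := {y : K | y^(q^2) = y ∧ y ≠ 0} with hFstar
  set T : Set K := {y : K | (y^(q^2)+y)^(q-1) = b ∧ y^N = c} with hT
  have hSeq : {y : K | y ≠ 0 ∧ (y⁻¹)^(q^3) + a*(y⁻¹)^(q^2) + (y⁻¹)^q + a*y⁻¹ = 0 ∧
      y^(q^3) + b*y^(q^2) + y^q + b*y = 0} = Fstar ∪ T := by
    ext y
    simp only [Set.mem_setOf_eq, Set.mem_union, hFstar, hT]
    constructor
    · rintro ⟨hy0, hyA, hyB⟩
      rw [hchar a ha0] at hyA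
      rw [hchar b hb0] at hyB
      rcases hyA with h | h
      · left
        refine ⟨?_, hy0⟩
        rw [inv_pow] at h
        exact inv_injective h
      · right
        have hyF : ¬ (y^(q^2) = y) := by
          intro hF
          have hzero : (y⁻¹)^(q^2) + y⁻¹ = 0 := by
            rw [inv_pow, hF]
            linear_combination y⁻¹ * (two0 (K := K))
          rw [hzero, zero_pow hq1] at h
          exact ha0 h.symm
        rcases hyB with hB | hB
        · exact absurd hB hyF
        refine ⟨hB, ?_⟩
        have h2 := Hxy y hy0
        rw [h, hB] at h2
        have hyN : y^N ≠ 0 := pow_ne_zero _ hy0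
        have h3 : a * y^N = b := by
          rw [h2]
          field_simp
        calc y^N = (a * a^q) * y^N := by rw [hainv]; ring
        _ = a^q * (a * y^N) := by ring
        _ = a^q * b := by rw [h3]
        _ = c := by rw [hc]; ring
    · rintro (⟨hF, hy0⟩ | ⟨hT1, hT2⟩)
      · refine ⟨hy0, ?_, ?_⟩
        · rw [hchar a ha0]; left; rw [inv_pow, hF]
        · rw [hchar b hb0]; left; exact hF
      · have hy0 : y ≠ 0 := by
          rintro rfl
          rw [zero_pow hN0] at hT2
          exact hc0 hT2.symm
        refine ⟨hy0, ?_, ?_⟩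
        · rw [hchar a ha0]; right
          rw [Hxy y hy0, hT1, hT2, hc]
          have haq : a^q ≠ 0 := pow_ne_zero _ ha0
          field_simp
          linear_combination (-1 : K) * hainv
        · rw [hchar b hb0]; right; exact hT1
  rw [hSeq]
  have hFsfin : {x : K | x^(q^2) = x}.Finite := by rw [hq2k]; exact fixed_finite (2*k) h2k0
  have hFscard : {x : K | x^(q^2) = x}.ncard = q^2 := by rw [hq2k]; exact count_fixed (2*k) h2k0
  have hFstarfin : Fstar.Finite := hFsfin.subset (fun y hy => hy.1)
  have hTfin : T.Finite := (pow_eq_finite N hN0 c).subset (fun y hy => hy.2)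
  have hdisj : Disjoint Fstar T := by
    rw [Set.disjoint_left]
    rintro y ⟨hF, _⟩ ⟨h1, _⟩
    have hz : y^(q^2) + y = 0 := by rw [hF]; linear_combination y * (two0 (K := K))
    rw [hz, zero_pow hq1] at h1
    exact hb0 h1.symm
  rw [Set.ncard_union_eq hdisj hFstarfin hTfin]
  have hFstarcard : Fstar.ncard = q^2 - 1 := by
    have hdiff : Fstar = {x : K | x^(q^2) = x} \ {0} := by
      ext y
      simp only [hFstar, Set.mem_setOf_eq, Set.mem_diff, Set.mem_singleton_iff]
    rw [hdiff, Set.ncard_diff_singleton_of_mem (s := {x : K | x^(q^2) = x})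
      (by simp [zero_pow (by positivity : q^2 ≠ 0)]), hFscard]
  have hTcard : T.ncard = (q-1) * q := by
    -- §1: pick t₀ with t₀^(q-1) = b
    obtain ⟨t₀, ht₀⟩ := IsAlgClosed.exists_pow_nat_eq b (n := q-1) (by omega)
    have ht₀0 : t₀ ≠ 0 := by
      rintro rfl; rw [zero_pow hq1] at ht₀; exact hb0 ht₀.symm
    have ht₀q2 : t₀^(q^2) = t₀ := by
      rw [← E1, pow_add, pow_mul, ht₀, hb, one_mul, pow_one]
    have ht₀N : t₀^N = b^2 := by
      rw [hN, mul_comm (q^2+1) (q-1), pow_mul, ht₀, ← E2, pow_add,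
        mul_comm (q-1) (q+1), pow_mul, hb, one_pow, one_mul]
    -- §2: the set U and its count via P1
    set U : Set K := {u : K | u^(q-1) = d ∧ Lf k u = 1} with hU
    have hUfin : U.Finite := (pow_eq_finite (q-1) hq1 d).subset (fun u hu => hu.1)
    obtain ⟨u₀, hu₀⟩ := IsAlgClosed.exists_pow_nat_eq d (n := q-1) (by omega)
    have hu₀0 : u₀ ≠ 0 := by
      rintro rfl; rw [zero_pow hq1] at hu₀; exact hd0 hu₀.symm
    have hu₀q2 : u₀^(q^2) = u₀ := by
      rw [← E1, pow_add, pow_mul, hu₀, hdq1, one_mul, pow_one]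
    set v : K := u₀ + u₀^q with hv
    have hvq : v^q = v := by
      rw [hv, frobq]
      have huqq : (u₀^q)^q = u₀^(q^2) := by rw [← pow_mul]; congr 1; ring
      rw [huqq, hu₀q2, add_comm]
    have hv0 : v ≠ 0 := by
      intro h
      rw [hv] at h
      have huq : u₀^q = u₀ := by linear_combination h - u₀ * (two0 (K := K))
      have hd' : d * u₀ = 1 * u₀ := by
        rw [← hu₀, one_mul, ← pow_succ, show q-1+1 = q by omega, huq]
      exact hd1 (mul_right_cancel₀ hu₀0 hd')
    have hsfact : ∀ s : K, s ≠ 0 → s^q = s → s^(q-1) = 1 := by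
      intro s hs0 hs
      have h' : s^(q-1) * s = 1 * s := by
        rw [one_mul, ← pow_succ, show q-1+1 = q by omega]; exact hs
      exact mul_right_cancel₀ hs0 h'
    have hsfact' : ∀ s : K, s^(q-1) = 1 → s^q = s := by
      intro s hs
      calc s^q = s^(q-1) * s := by rw [← pow_succ]; congr 1; omega
      _ = s := by rw [hs, one_mul]
    set P1 : Set K := {w : K | w^q = w ∧ Mf k w = 1} with hP1s
    have hUP1 : U = (fun w => (u₀ * v⁻¹) * w) '' P1 := by
      ext u
      simp only [hU, hP1s, Set.mem_setOf_eq, Set.mem_image]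
      constructor
      · rintro ⟨h1, h2⟩
        have hu0 : u ≠ 0 := by rintro rfl; rw [zero_pow hq1] at h1; exact hd0 h1.symm
        have hs0 : u * u₀⁻¹ ≠ 0 := mul_ne_zero hu0 (inv_ne_zero hu₀0)
        have hsq1 : (u * u₀⁻¹)^(q-1) = 1 := by
          rw [mul_pow, inv_pow, h1, hu₀]
          field_simp
        have hsq : (u * u₀⁻¹)^q = u * u₀⁻¹ := hsfact' _ hsq1
        refine ⟨v * (u * u₀⁻¹), ⟨?_, ?_⟩, ?_⟩
        · rw [mul_pow, hvq, hsq]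
        · have hkey : Lf k (u₀ * (u * u₀⁻¹)) = Mf k ((u₀ + u₀^(2^k)) * (u * u₀⁻¹)) :=
            Lf_scale k u₀ _ (by rw [← hqk]; exact hsq)
          rw [← hqk, ← hv] at hkey
          have hus : u₀ * (u * u₀⁻¹) = u := by field_simp
          rw [hus] at hkey
          rw [← hkey, h2]
        · field_simp
      · rintro ⟨w, ⟨hw1, hw2⟩, rfl⟩
        have hw0 : w ≠ 0 := by rintro rfl; rw [Mf_zero] at hw2; exact zero_ne_one hw2
        have hs0 : v⁻¹ * w ≠ 0 := mul_ne_zero (inv_ne_zero hv0) hw0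
        have hsq : (v⁻¹ * w)^q = v⁻¹ * w := by rw [mul_pow, inv_pow, hvq, hw1]
        have hsq1 : (v⁻¹ * w)^(q-1) = 1 := hsfact _ hs0 hsq
        have hrw : u₀ * v⁻¹ * w = u₀ * (v⁻¹ * w) := by ring
        constructor
        · rw [hrw, mul_pow, hu₀, hsq1, mul_one]
        · rw [hrw]
          have hkey : Lf k (u₀ * (v⁻¹ * w)) = Mf k ((u₀ + u₀^(2^k)) * (v⁻¹ * w)) :=
            Lf_scale k u₀ _ (by rw [← hqk]; exact hsq)
          rw [← hqk, ← hv] at hkey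
          rw [hkey, show v * (v⁻¹ * w) = w from by field_simp, hw2]
    have hUcard : U.ncard = 2^(k-1) := by
      rw [hUP1, Set.ncard_image_of_injective _
        (mul_right_injective₀ (mul_ne_zero hu₀0 (inv_ne_zero hv0)))]
      have hPeq : P1 = {w : K | w^(2^k) = w ∧ Mf k w = 1} := by rw [hP1s, hqk]
      rw [hPeq]
      exact count_P1 k hk
    -- §3: quadratic section g
    have hex : ∀ u : K, ∃ w : K, w^2 + w = u := by
      intro u
      have hdeg : (X^2 + X - C u : K[X]).degree = 2 := by
        rw [add_sub_assoc]
        rw [Polynomial.degree_add_eq_left_of_degree_lt]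
        · exact Polynomial.degree_X_pow 2
        · rw [Polynomial.degree_X_pow, Polynomial.degree_X_sub_C]
          norm_num
      obtain ⟨w, hw⟩ := IsAlgClosed.exists_root (p := (X^2 + X - C u : K[X]))
        (by rw [hdeg]; norm_num)
      refine ⟨w, ?_⟩
      have := hw
      simp only [Polynomial.IsRoot, Polynomial.eval_sub, Polynomial.eval_add,
        Polynomial.eval_pow, Polynomial.eval_X, Polynomial.eval_C] at this
      linear_combination this
    choose g hg using hex
    have hgmem : ∀ u z : K, (z = g u ∨ z = g u + 1) → z^2 + z = u := by
      rintro u z (rfl | rfl)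
      · exact hg u
      · linear_combination hg u + (g u + 1) * (two0 (K := K))
    -- §4: the set W and its 2:1 count
    set W : Set K := {w : K | w^(q^2) + w = 1 ∧ (w^2+w)^(q-1) = d} with hW
    have hWU : W = ⋃ u ∈ U, ({g u, g u + 1} : Set K) := by
      ext w
      simp only [hW, hU, Set.mem_setOf_eq, Set.mem_iUnion, Set.mem_insert_iff,
        Set.mem_singleton_iff, exists_prop]
      constructor
      · rintro ⟨h1, h2⟩
        refine ⟨w^2 + w, ⟨h2, ?_⟩, ?_⟩
        · have hlq := Lf_quad k w
          rw [← hq2k] at hlq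
          rw [hlq, h1]
        · have hzz : (w + g (w^2+w))^2 + (w + g (w^2+w)) = 0 := by
            linear_combination hg (w^2+w) + (w^2 + w*(g (w^2+w)) + w) * (two0 (K := K))
          have hfac : (w + g (w^2+w)) * ((w + g (w^2+w)) + 1) = 0 := by
            linear_combination hzz
          rcases mul_eq_zero.mp hfac with h | h
          · left; linear_combination h - (g (w^2+w)) * (two0 (K := K))
          · right; linear_combination h - (g (w^2+w) + 1) * (two0 (K := K))
      · rintro ⟨u, ⟨hu1, hu2⟩, hz⟩
        have hwu : w^2 + w = u := hgmem u w hz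
        constructor
        · have hlq := Lf_quad k w
          rw [← hq2k] at hlq
          rw [← hlq, hwu, hu2]
        · rw [hwu]; exact hu1
    have hWcard : W.ncard = q := by
      classical
      rw [hWU]
      have hcoe : (⋃ u ∈ U, ({g u, g u + 1} : Set K)) =
          ↑(hUfin.toFinset.biUnion (fun u => {g u, g u + 1})) := by
        ext z
        simp [Set.Finite.mem_toFinset]
      rw [hcoe, Set.ncard_coe_finset]
      rw [Finset.card_biUnion]
      · have hpair : ∀ u ∈ hUfin.toFinset, ({g u, g u + 1} : Finset K).card = 2 := by
          intro u _
          rw [Finset.card_pair]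
          intro h
          exact one_ne_zero ((left_eq_add (a := g u)).mp h)
        rw [Finset.sum_congr rfl hpair, Finset.sum_const, smul_eq_mul]
        have hUc : hUfin.toFinset.card = 2^(k-1) := by
          rw [← Set.ncard_eq_toFinset_card U hUfin]
          exact hUcard
        rw [hUc, ← pow_succ, show k-1+1 = k by omega, ← hqk]
      · intro x hx y hy hxy
        rw [Function.onFun, Finset.disjoint_left]
        intro z hz1 hz2
        apply hxy
        have hx' : z^2 + z = x := hgmem x z (by simpa using hz1)
        have hy' : z^2 + z = y := hgmem y z (by simpa using hz2)
        rw [← hx', ← hy']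
    -- §5: Tt = t₀ • W
    set Tt : Set K := {y : K | y^(q^2) + y = t₀ ∧ y^N = c} with hTts
    have hwpow : ∀ w : K, w^(q^2) + w = 1 → w^N = (w^2+w)^(q-1) := by
      intro w hw
      have hwq2 : w^(q^2) = 1 + w := by linear_combination hw - w * (two0 (K := K))
      have h1 : w^(q^2+1) = w^2 + w := by
        rw [pow_succ, hwq2]; ring
      rw [hN, pow_mul, h1]
    have hb2d : b^2 * d = c := by
      rw [hd, hc, mul_pow]
      linear_combination (-(b * a^q)) * hbinv + (b^2*b^q*a^q - b*a^q) * (two0 (K := K))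
    have hTtW : Tt = (fun w => t₀ * w) '' W := by
      ext y
      simp only [hTts, hW, Set.mem_setOf_eq, Set.mem_image]
      constructor
      · rintro ⟨h1, h2⟩
        have hy1 : (t₀⁻¹*y)^(q^2) + (t₀⁻¹*y) = 1 := by
          rw [mul_pow, inv_pow, ht₀q2]
          field_simp
          linear_combination h1
        refine ⟨t₀⁻¹ * y, ⟨hy1, ?_⟩, by field_simp⟩
        have hthis := hwpow _ hy1
        rw [← hthis, mul_pow, inv_pow, ht₀N, h2, ← hb2d]
        field_simp
      · rintro ⟨w, ⟨hw1, hw2⟩, rfl⟩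
        constructor
        · rw [mul_pow, ht₀q2]
          linear_combination t₀ * hw1
        · rw [mul_pow, ht₀N, hwpow w hw1, hw2]
          exact hb2d
    have hTtcard : Tt.ncard = q := by
      rw [hTtW, Set.ncard_image_of_injective _ (mul_right_injective₀ ht₀0), hWcard]
    -- §6: product structure on T
    set Rb : Set K := {t : K | t^(q-1) = b} with hRbs
    have hRbcard : Rb.ncard = q - 1 := count_root_shell q k hk hqk b hb0
    have htrace : ∀ t ∈ Rb, ∀ y ∈ Tt, (t * t₀⁻¹ * y)^(q^2) + (t * t₀⁻¹ * y) = t := by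
      intro t ht y hy
      have hmu' : (t * t₀⁻¹)^(q-1) = 1 := by
        rw [mul_pow, inv_pow, ht, ht₀]
        field_simp
      obtain ⟨hmq2, _⟩ := hmu _ hmu'
      rw [mul_pow, hmq2]
      have hrr : t * t₀⁻¹ * y^(q^2) + t * t₀⁻¹ * y = t * t₀⁻¹ * (y^(q^2) + y) := by ring
      rw [hrr, hy.1]
      field_simp
    have hto : ∀ t ∈ Rb, ∀ y ∈ Tt, (t * t₀⁻¹ * y) ∈ T := by
      intro t ht y hy
      have hmu' : (t * t₀⁻¹)^(q-1) = 1 := by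
        rw [mul_pow, inv_pow, ht, ht₀]
        field_simp
      obtain ⟨_, hmN⟩ := hmu _ hmu'
      constructor
      · rw [htrace t ht y hy]
        exact ht
      · rw [mul_pow, hmN, one_mul]
        exact hy.2
    have hTne : ∀ y : K, y ∈ T → y^(q^2) + y ≠ 0 := by
      intro y hy h
      have h1 : (y^(q^2)+y)^(q-1) = b := hy.1
      rw [h, zero_pow hq1] at h1
      exact hb0 h1.symm
    have hback2 : ∀ y : K, y ∈ T → t₀ * (y^(q^2)+y)⁻¹ * y ∈ Tt := by
      intro y hy
      have htne := hTne y hy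
      have hmu' : (t₀ * (y^(q^2)+y)⁻¹)^(q-1) = 1 := by
        rw [mul_pow, inv_pow, ht₀, hy.1]
        field_simp
      obtain ⟨hmq2, hmN⟩ := hmu _ hmu'
      constructor
      · rw [mul_pow, hmq2]
        have hrr : t₀ * (y^(q^2)+y)⁻¹ * y^(q^2) + t₀ * (y^(q^2)+y)⁻¹ * y
            = t₀ * (y^(q^2)+y)⁻¹ * (y^(q^2) + y) := by ring
        rw [hrr]
        field_simp
      · rw [mul_pow, hmN, one_mul]
        exact hy.2
    have hRbne : ∀ t : K, t ∈ Rb → t ≠ 0 := by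
      rintro t ht rfl
      have h1 : (0:K)^(q-1) = b := ht
      rw [zero_pow hq1] at h1
      exact hb0 h1.symm
    have hcardeq : Nat.card (↥Rb × ↥Tt) = Nat.card ↥T := by
      apply Nat.card_congr
      refine ⟨fun p => ⟨p.1.1 * t₀⁻¹ * p.2.1, hto _ p.1.2 _ p.2.2⟩,
              fun y => ⟨⟨y.1^(q^2)+y.1, y.2.1⟩,
                ⟨t₀ * (y.1^(q^2)+y.1)⁻¹ * y.1, hback2 _ y.2⟩⟩, ?_, ?_⟩
      · rintro ⟨⟨t, ht⟩, ⟨y, hy⟩⟩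
        have htne : t ≠ 0 := hRbne t ht
        simp only [Prod.mk.injEq, Subtype.mk.injEq]
        constructor
        · exact htrace t ht y hy
        · rw [htrace t ht y hy]
          field_simp
      · rintro ⟨y, hy⟩
        have htne := hTne y hy
        simp only [Subtype.mk.injEq]
        field_simp [hTne y hy]
    rw [← Nat.card_coe_set_eq, ← hcardeq, Nat.card_prod,
      Nat.card_coe_set_eq, Nat.card_coe_set_eq, hRbcard, hTtcard]



  rw [hFstarcard, hTcard]
  have e2 : (q-1)*q = q^2 - q := by zify [show 1 ≤ q by omega, show q ≤ q^2 from Nat.le_self_pow (by norm_num) q]; ring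
  have e3 : q ≤ q^2 := Nat.le_self_pow (by norm_num) q
  omega



end mainsec

/-- For `q` a power of `2` and `a, b` with `a^{q+1} = b^{q+1} = 1` and `ab ≠ 1`, the root sets
`A`, `B` of `x^{q^3} + a x^{q^2} + x^q + a x` and `x^{q^3} + b x^{q^2} + x^q + b x` satisfy
`|A⁻¹ ∩ B| = 2q^2 - q - 1`. -/
theorem stmt11 (F : Type*) [Field F] [Fintype F] [CharP F 2]
    (K : Type*) [Field K] [Algebra F K] [IsAlgClosure F K]
    (q : ℕ) (hq : Fintype.card F = q)
    (a b : K) (ha : a ^ (q + 1) = 1) (hb : b ^ (q + 1) = 1) (hab : a * b ≠ 1)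
    (A B : Set K)
    (hA : A = {x : K | x ^ q ^ 3 + a * x ^ q ^ 2 + x ^ q + a * x = 0})
    (hB : B = {x : K | x ^ q ^ 3 + b * x ^ q ^ 2 + x ^ q + b * x = 0}) :
    Nat.card ((fun x => x⁻¹) '' (A \ {0}) ∩ B : Set K) = 2 * q ^ 2 - q - 1 := by
  haveI : CharP K 2 := charP_of_injective_algebraMap (algebraMap F K).injective 2
  haveI : IsAlgClosed K := IsAlgClosure.isAlgClosed F
  obtain ⟨n, hp, hcard⟩ := FiniteField.card F 2
  have hq2k : q = 2 ^ (n : ℕ) := by rw [← hq, hcard]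
  have hset : ((fun x : K => x⁻¹) '' (A \ {0}) ∩ B) =
      {y : K | y ≠ 0 ∧ (y⁻¹)^(q^3) + a*(y⁻¹)^(q^2) + (y⁻¹)^q + a*y⁻¹ = 0 ∧
        y^(q^3) + b*y^(q^2) + y^q + b*y = 0} := by
    ext y
    simp only [hA, hB, Set.mem_inter_iff, Set.mem_image, Set.mem_diff,
      Set.mem_singleton_iff, Set.mem_setOf_eq]
    constructor
    · rintro ⟨⟨x, ⟨hxA, hx0⟩, rfl⟩, hyB⟩
      refine ⟨inv_ne_zero hx0, ?_, hyB⟩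
      rw [inv_inv]
      exact hxA
    · rintro ⟨hy0, hyA, hyB⟩
      exact ⟨⟨y⁻¹, ⟨hyA, inv_ne_zero hy0⟩, inv_inv y⟩, hyB⟩
  rw [Nat.card_coe_set_eq, hset]
  exact main_count (n : ℕ) q n.pos.ne' hq2k a b ha hb hab
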